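/- Let (T, U) be a compact topological space, (ψ_n) a sequence of nonpositive upper semicontinuous real-valued functions on T decreasing pointwise to a function γ, d a U-continuous pseudometric on T, K = γ⁻¹({0}) nonempty, and (c_n) a sequence of positive reals converging to 0. Then the Hausdorff distance (with respect to d) between the sets {t : |ψ_n(t)| ≤ c_n} and K converges to 0 as n → ∞. -/

import Mathlib

open Filter Topology Metric Set

/-- Hausdorff-distance convergence of near-zero sets of a decreasing sequence of
nonpositive upper semicontinuous functions to the zero set of the limit. -/
theorem hausdorff_distance_near_zero_sets_tendsto_zero
    {T : Type*} [TopologicalSpace T] [CompactSpace T]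
    (ψ : ℕ → T → ℝ) (γ : T → ℝ) (d : T → T → ℝ) (c : ℕ → ℝ)
    (husc : ∀ n, UpperSemicontinuous (ψ n))
    (hnonpos : ∀ n t, ψ n t ≤ 0)
    (hdec : ∀ t, Antitone fun n => ψ n t)
    (hlim : ∀ t, Tendsto (fun n => ψ n t) atTop (𝓝 (γ t)))
    (hdnonneg : ∀ s t, 0 ≤ d s t)
    (hdrefl : ∀ t, d t t = 0)
    (hdsymm : ∀ s t, d s t = d t s)
    (hdtri : ∀ s t u, d s u ≤ d s t + d t u)
    (hdcont : ∀ t : T, Tendsto (fun s => d s t) (𝓝 t) (𝓝 0))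
    (hK : {t : T | γ t = 0}.Nonempty)
    (hc : ∀ n, 0 < c n) (hc0 : Tendsto c atTop (𝓝 0)) :
    Tendsto (fun n =>
        max
          (sSup {r : ℝ | ∃ t : T, |ψ n t| ≤ c n ∧
              r = sInf {s : ℝ | ∃ k : T, γ k = 0 ∧ s = d t k}})
          (sSup {r : ℝ | ∃ k : T, γ k = 0 ∧
              r = sInf {s : ℝ | ∃ t : T, |ψ n t| ≤ c n ∧ s = d k t}}))
      atTop (𝓝 0) := by
  classical
  obtain ⟨k0, hk0⟩ := hK
  set g : T → ℝ := fun t => sInf {s : ℝ | ∃ k : T, γ k = 0 ∧ s = d t k} with hgdef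
  -- basic facts about γ and ψ
  have hγle : ∀ t n, γ t ≤ ψ n t := fun t n =>
    le_of_tendsto (hlim t) (eventually_atTop.2 ⟨n, fun m hm => hdec t hm⟩)
  have hψK : ∀ n {k : T}, γ k = 0 → ψ n k = 0 := by
    intro n k hk
    have h1 := hγle k n
    rw [hk] at h1
    exact le_antisymm (hnonpos n k) h1
  have hKA : ∀ n {k : T}, γ k = 0 → |ψ n k| ≤ c n := by
    intro n k hk; rw [hψK n hk, abs_zero]; exact (hc n).le
  -- basic facts about g
  have hbdd : ∀ t : T, BddBelow {s : ℝ | ∃ k : T, γ k = 0 ∧ s = d t k} := by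
    intro t
    exact ⟨0, by rintro s ⟨k, -, rfl⟩; exact hdnonneg t k⟩
  have hne : ∀ t : T, ({s : ℝ | ∃ k : T, γ k = 0 ∧ s = d t k}).Nonempty :=
    fun t => ⟨d t k0, k0, hk0, rfl⟩
  have hg0 : ∀ t, 0 ≤ g t := by
    intro t
    refine le_csInf (hne t) ?_
    rintro s ⟨k, -, rfl⟩; exact hdnonneg t k
  have hgle : ∀ t k, γ k = 0 → g t ≤ d t k := fun t k hk => csInf_le (hbdd t) ⟨k, hk, rfl⟩
  have hgK : ∀ {k : T}, γ k = 0 → g k = 0 := by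
    intro k hk
    refine le_antisymm ?_ (hg0 k)
    have := hgle k k hk
    rwa [hdrefl k] at this
  have hglip : ∀ a b, g a ≤ g b + d a b := by
    intro a b
    have h : g a - d a b ≤ g b := by
      refine le_csInf (hne b) ?_
      rintro s ⟨k, hk, rfl⟩
      have h1 := hgle a k hk
      have h2 := hdtri a b k
      linarith
    linarith
  have hgcont : Continuous g := by
    rw [continuous_iff_continuousAt]
    intro t
    rw [ContinuousAt, tendsto_iff_dist_tendsto_zero]
    have h1 : ∀ s, dist (g s) (g t) ≤ d s t := by
      intro s
      rw [Real.dist_eq, abs_le]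
      constructor
      · have := hglip t s; rw [hdsymm t s] at this; linarith
      · have := hglip s t; linarith
    exact squeeze_zero (fun s => dist_nonneg) h1 (hdcont t)
  -- the second component is always 0
  have hS2 : ∀ n, {r : ℝ | ∃ k : T, γ k = 0 ∧
      r = sInf {s : ℝ | ∃ t : T, |ψ n t| ≤ c n ∧ s = d k t}} = {(0 : ℝ)} := by
    intro n
    have key : ∀ k : T, γ k = 0 →
        sInf {s : ℝ | ∃ t : T, |ψ n t| ≤ c n ∧ s = d k t} = 0 := by
      intro k hk
      refine le_antisymm ?_ ?_
      · have h0 : d k k ∈ {s : ℝ | ∃ t : T, |ψ n t| ≤ c n ∧ s = d k t} := ⟨k, hKA n hk, rfl⟩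
        have := csInf_le ⟨0, by rintro s ⟨t, -, rfl⟩; exact hdnonneg k t⟩ h0
        rwa [hdrefl k] at this
      · refine le_csInf ⟨d k k, k, hKA n hk, rfl⟩ ?_
        rintro s ⟨t, -, rfl⟩; exact hdnonneg k t
    ext r
    simp only [mem_setOf_eq, mem_singleton_iff]
    constructor
    · rintro ⟨k, hk, rfl⟩; exact key k hk
    · rintro rfl; exact ⟨k0, hk0, (key k0 hk0).symm⟩
  -- bound for g
  obtain ⟨x, -, hx⟩ := isCompact_univ.exists_isMaxOn ⟨k0, mem_univ k0⟩ hgcont.continuousOn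
  set M : ℝ := g x with hM
  have hgM : ∀ t, g t ≤ M := fun t => hx (mem_univ t)
  -- the first component
  set F : ℕ → ℝ := fun n => sSup {r : ℝ | ∃ t : T, |ψ n t| ≤ c n ∧
      r = sInf {s : ℝ | ∃ k : T, γ k = 0 ∧ s = d t k}} with hFdef
  have hS1ne : ∀ n, ({r : ℝ | ∃ t : T, |ψ n t| ≤ c n ∧
      r = sInf {s : ℝ | ∃ k : T, γ k = 0 ∧ s = d t k}}).Nonempty :=
    fun n => ⟨g k0, k0, hKA n hk0, rfl⟩
  have hS1bdd : ∀ n, BddAbove {r : ℝ | ∃ t : T, |ψ n t| ≤ c n ∧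
      r = sInf {s : ℝ | ∃ k : T, γ k = 0 ∧ s = d t k}} := by
    intro n
    exact ⟨M, by rintro r ⟨t, -, rfl⟩; exact hgM t⟩
  have hF0 : ∀ n, 0 ≤ F n := by
    intro n
    have h0 : (0 : ℝ) ∈ {r : ℝ | ∃ t : T, |ψ n t| ≤ c n ∧
        r = sInf {s : ℝ | ∃ k : T, γ k = 0 ∧ s = d t k}} :=
      ⟨k0, hKA n hk0, (hgK hk0).symm⟩
    exact le_csSup (hS1bdd n) h0
  -- reduce to convergence of F
  have hmax : (fun n =>
      max
        (sSup {r : ℝ | ∃ t : T, |ψ n t| ≤ c n ∧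
            r = sInf {s : ℝ | ∃ k : T, γ k = 0 ∧ s = d t k}})
        (sSup {r : ℝ | ∃ k : T, γ k = 0 ∧
            r = sInf {s : ℝ | ∃ t : T, |ψ n t| ≤ c n ∧ s = d k t}})) = F := by
    funext n
    rw [hS2 n, csSup_singleton]
    exact max_eq_left (hF0 n)
  rw [hmax]
  -- prove Tendsto F atTop (𝓝 0)
  rw [tendsto_order]
  constructor
  · intro a ha
    exact Eventually.of_forall fun n => lt_of_lt_of_le ha (hF0 n)
  · intro a ha
    -- compact set where g ≥ a/2
    set C : Set T := {t | a / 2 ≤ g t} with hC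
    have hCclosed : IsClosed C := isClosed_le continuous_const hgcont
    have hCcomp : IsCompact C := hCclosed.isCompact
    -- cover C
    have hVopen : ∀ p : ℕ × ℕ, IsOpen {t | ψ p.1 t < -(1 / ((p.2 : ℝ) + 1))} := by
      intro p
      exact (upperSemicontinuous_iff_isOpen_preimage.1 (husc p.1)) _
    have hcover : C ⊆ ⋃ p : ℕ × ℕ, {t | ψ p.1 t < -(1 / ((p.2 : ℝ) + 1))} := by
      intro t ht
      have hγt : γ t < 0 := by
        rcases lt_or_eq_of_le (le_trans (hγle t 0) (hnonpos 0 t)) with h | h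
        · exact h
        · exfalso
          have : g t = 0 := hgK h
          have h2 : a / 2 ≤ g t := ht
          rw [this] at h2
          linarith
      obtain ⟨m, hm⟩ := exists_nat_one_div_lt (show (0 : ℝ) < -γ t by linarith)
      have hng : γ t < -(1 / ((m : ℝ) + 1)) := by linarith
      have := (hlim t).eventually_lt_const hng
      obtain ⟨n, hn⟩ := this.exists
      exact mem_iUnion.2 ⟨(n, m), hn⟩
    obtain ⟨s, hs⟩ := hCcomp.elim_finite_subcover _ hVopen hcover
    set N : ℕ := s.sup Prod.fst with hN
    set Q : ℕ := s.sup Prod.snd with hQ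
    set δ : ℝ := 1 / ((Q : ℝ) + 1) with hδ
    have hδpos : 0 < δ := by positivity
    have hCψ : ∀ t ∈ C, ψ N t < -δ := by
      intro t ht
      obtain ⟨p, hp, htp⟩ := mem_iUnion₂.1 (hs ht)
      have h1 : ψ N t ≤ ψ p.1 t := hdec t (Finset.le_sup (f := Prod.fst) hp)
      have h2 : δ ≤ 1 / ((p.2 : ℝ) + 1) := by
        apply one_div_le_one_div_of_le (by positivity)
        have : p.2 ≤ Q := Finset.le_sup (f := Prod.snd) hp
        exact_mod_cast add_le_add_left (Nat.cast_le.2 this) 1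
      have h3 : ψ p.1 t < -(1 / ((p.2 : ℝ) + 1)) := htp
      linarith
    filter_upwards [hc0.eventually_lt_const hδpos, eventually_ge_atTop N] with n hcn hnN
    have hFle : F n ≤ a / 2 := by
      refine csSup_le (hS1ne n) ?_
      rintro r ⟨t, ht, rfl⟩
      by_contra hcon
      push_neg at hcon
      have htC : t ∈ C := le_of_lt hcon
      have h1 : ψ n t ≤ ψ N t := hdec t hnN
      have h2 := hCψ t htC
      have h3 : |ψ n t| = -ψ n t := abs_of_nonpos (hnonpos n t)
      rw [h3] at ht
      linarith
    linarith
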